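/- Let d, k be positive integers, let D_val = {g_1, ..., g_k} be a family of k vectors in ℝ^d (validation gradients), and let S be a nonempty finite family of vectors {g(z)}_{z∈S} in ℝ^d (selected gradients). Fix γ > 0 and λ > 0. Define the regularized empirical Fisher matrix I_γ(S) := Σ_{z∈S} g(z) g(z)^T + γ I_d, the regularized total uncertainty G_γ(S) := Σ_{x∈D_val} g(x)^T I_γ(S)^{-1} g(x), and the gradient-coverage surrogate U_λ(S) := Σ_{x∈D_val} max_{z∈S} exp(−λ ‖g(x) − g(z)‖²). Assume (i) bounded gradients: ‖g(v)‖ ≤ L for all v ∈ D_val ∪ S, and (ii) non-degenerate norms: ‖g(v)‖ ≥ m > 0 for all v ∈ D_val ∪ S. Then for every threshold τ ∈ (0, 2m²], G_γ(S) ≤ kL²/γ − ((2m² − τ)² / (4γ²(1 + L²/γ))) · (U_λ(S) − k e^{−λτ}) / (1 − e^{−λτ}). -/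

import Mathlib

open Matrix BigOperators

private lemma dot_self_nonneg' {d : ℕ} (x : Fin d → ℝ) : 0 ≤ x ⬝ᵥ x :=
  Finset.sum_nonneg fun i _ => mul_self_nonneg _

private lemma vecMulVec_mulVec' {d : ℕ} (u v x : Fin d → ℝ) :
    vecMulVec u v *ᵥ x = (v ⬝ᵥ x) • u := by
  ext i
  simp [Matrix.mulVec, dotProduct, vecMulVec_apply, Finset.sum_mul, Finset.mul_sum,
    mul_assoc, mul_comm, mul_left_comm]

private lemma sum_mulVec' {ι d : Type*} [Fintype ι] [Fintype d]
    (M : ι → Matrix d d ℝ) (w : d → ℝ) :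
    (∑ z : ι, M z) *ᵥ w = ∑ z : ι, M z *ᵥ w := by
  ext i
  simp [Matrix.mulVec, dotProduct, Matrix.sum_apply, Finset.sum_apply, Finset.sum_mul]
  rw [Finset.sum_comm]

private lemma sum_dotProduct' {ι d : Type*} [Fintype ι] [Fintype d]
    (f : ι → (d → ℝ)) (w : d → ℝ) :
    (∑ z : ι, f z) ⬝ᵥ w = ∑ z : ι, f z ⬝ᵥ w := by
  simp [dotProduct, Finset.sum_apply, Finset.sum_mul]
  rw [Finset.sum_comm]

private lemma norm_sq_eq_dot {d : ℕ} (v : EuclideanSpace ℝ (Fin d)) : ‖v‖ ^ 2 = v ⬝ᵥ v := by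
  rw [EuclideanSpace.norm_eq, Real.sq_sqrt (by positivity)]
  simp [dotProduct, Real.norm_eq_abs, sq_abs, sq]

/-- completing-the-square core inequality -/
private lemma key_ineq {d : ℕ} {γ : ℝ} (hγ : 0 < γ) (u v w : Fin d → ℝ)
    (h : γ * (w ⬝ᵥ w) + (u ⬝ᵥ w) ^ 2 ≤ v ⬝ᵥ w) :
    v ⬝ᵥ w ≤ (v ⬝ᵥ v) / γ - (u ⬝ᵥ v) ^ 2 / (γ * (γ + u ⬝ᵥ u)) := by
  have hc : 0 ≤ u ⬝ᵥ u := dot_self_nonneg' u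
  have hs : 0 < γ + u ⬝ᵥ u := by linarith
  set a := v ⬝ᵥ v with ha
  set b := u ⬝ᵥ v with hb
  set c := u ⬝ᵥ u with hc'
  set ω := w ⬝ᵥ w with hω
  set β := v ⬝ᵥ w with hβ
  set α := u ⬝ᵥ w with hα
  set t : ℝ := b / (γ + c) with ht
  set r : Fin d → ℝ := γ • w - v + t • u with hr
  have h2 : w ⬝ᵥ u = α := dotProduct_comm w u
  have h3 : v ⬝ᵥ u = b := dotProduct_comm v u
  have h4 : w ⬝ᵥ v = β := dotProduct_comm w v
  have hrr : r ⬝ᵥ r =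
      γ ^ 2 * ω + a + t ^ 2 * c - 2 * γ * β + 2 * γ * t * α - 2 * t * b := by
    simp only [hr, add_dotProduct, dotProduct_add, sub_dotProduct,
      dotProduct_sub, smul_dotProduct, dotProduct_smul, smul_eq_mul,
      h2, h3, h4]
    ring
  have hrnn : 0 ≤ r ⬝ᵥ r := dot_self_nonneg' r
  have hid : a / γ - b ^ 2 / (γ * (γ + c)) - (2 * β - γ * ω - α ^ 2) =
      (r ⬝ᵥ r) / γ + (α - t) ^ 2 := by
    rw [hrr, ht]
    field_simp
    ring
  have hαt : 0 ≤ (α - t) ^ 2 := sq_nonneg _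
  have hdiv : 0 ≤ (r ⬝ᵥ r) / γ := div_nonneg hrnn hγ.le
  linarith

set_option maxHeartbeats 1000000 in
/-- **Regularized Fisher–Coverage Relationship.**
`gval : Fin k → ℝ^d` are the validation gradients, `gS : ι → ℝ^d` (for a nonempty
finite index type `ι`) are the selected gradients.  The regularized empirical Fisher is
`I_γ(S) = ∑_z g(z) g(z)ᵀ + γ I`, the regularized total uncertainty is
`G_γ(S) = ∑_x g(x)ᵀ I_γ(S)⁻¹ g(x)`, and the gradient-coverage surrogate is
`U_λ(S) = ∑_x max_z exp (-λ ‖g(x) - g(z)‖²)`.  Under bounded (`≤ L`) and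
non-degenerate (`≥ m > 0`) gradient norms, for every threshold `τ ∈ (0, 2m²]`,
`G_γ(S) ≤ k L²/γ - ((2m² - τ)² / (4γ²(1 + L²/γ))) · (U_λ(S) - k e^{-λτ})/(1 - e^{-λτ})`. -/
theorem regularized_fisher_coverage
    (d k : ℕ) (hd : 0 < d) (hk : 0 < k)
    (gval : Fin k → EuclideanSpace ℝ (Fin d))
    (ι : Type) [Fintype ι] [Nonempty ι]
    (gS : ι → EuclideanSpace ℝ (Fin d))
    (γ lam L m : ℝ) (hγ : 0 < γ) (hlam : 0 < lam) (hm : 0 < m)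
    (hL_val : ∀ x : Fin k, ‖gval x‖ ≤ L) (hL_S : ∀ z : ι, ‖gS z‖ ≤ L)
    (hm_val : ∀ x : Fin k, m ≤ ‖gval x‖) (hm_S : ∀ z : ι, m ≤ ‖gS z‖)
    (τ : ℝ) (hτ0 : 0 < τ) (hτ2 : τ ≤ 2 * m ^ 2) :
    (∑ x : Fin k,
        gval x ⬝ᵥ
          ((∑ z : ι, vecMulVec (gS z) (gS z) + γ • (1 : Matrix (Fin d) (Fin d) ℝ))⁻¹ *ᵥ
            gval x))
      ≤ (k : ℝ) * L ^ 2 / γ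
        - (2 * m ^ 2 - τ) ^ 2 / (4 * γ ^ 2 * (1 + L ^ 2 / γ)) *
            (((∑ x : Fin k, ⨆ z : ι, Real.exp (-lam * ‖gval x - gS z‖ ^ 2))
                - (k : ℝ) * Real.exp (-lam * τ)) / (1 - Real.exp (-lam * τ))) := by
  classical
  have hL : 0 < L := lt_of_lt_of_le hm (le_trans (hm_S (Classical.arbitrary ι)) (hL_S _))
  set A : Matrix (Fin d) (Fin d) ℝ :=
    ∑ z : ι, vecMulVec (gS z) (gS z) + γ • (1 : Matrix (Fin d) (Fin d) ℝ) with hA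
  set gS' : ι → (Fin d → ℝ) := fun z i => gS z i with hgS'
  set gv' : Fin k → (Fin d → ℝ) := fun x i => gval x i with hgv'
  -- quadratic form of A
  have hAv : ∀ w : Fin d → ℝ,
      A *ᵥ w = (∑ z : ι, (gS' z ⬝ᵥ w) • gS' z) + γ • w := by
    intro w
    rw [hA, Matrix.add_mulVec, sum_mulVec', smul_mulVec, Matrix.one_mulVec]
    congr 1
    exact Finset.sum_congr rfl fun z _ => vecMulVec_mulVec' _ _ _
  have hquad : ∀ w : Fin d → ℝ,
      (A *ᵥ w) ⬝ᵥ w = (∑ z : ι, (gS' z ⬝ᵥ w) ^ 2) + γ * (w ⬝ᵥ w) := by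
    intro w
    rw [hAv, add_dotProduct, sum_dotProduct', smul_dotProduct]
    simp only [smul_dotProduct, smul_eq_mul, sq]
  -- A is positive definite
  have hsym : A.IsHermitian := by
    rw [Matrix.IsHermitian]
    ext i j
    simp [hA, Matrix.conjTranspose_apply, Matrix.sum_apply, Matrix.add_apply,
      Matrix.smul_apply, vecMulVec_apply, Matrix.one_apply, mul_comm, eq_comm]
  have hApd : A.PosDef := by
    refine posDef_iff_dotProduct_mulVec.mpr ⟨hsym, fun x hx => ?_⟩
    have hxx : 0 < x ⬝ᵥ x := by
      rcases (dot_self_nonneg' x).lt_or_eq with h | h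
      · exact h
      · exact absurd (dotProduct_self_eq_zero.mp h.symm) hx
    have hq := hquad x
    have hsnn : 0 ≤ ∑ z : ι, (gS' z ⬝ᵥ x) ^ 2 :=
      Finset.sum_nonneg fun z _ => sq_nonneg _
    have hpos : 0 < (A *ᵥ x) ⬝ᵥ x := by rw [hq]; nlinarith
    calc (0 : ℝ) < (A *ᵥ x) ⬝ᵥ x := hpos
    _ = star x ⬝ᵥ (A *ᵥ x) := by rw [dotProduct_comm]; rfl
  have hdet : IsUnit A.det := hApd.det_pos.ne'.isUnit
  have hAinv : ∀ v : Fin d → ℝ, A *ᵥ (A⁻¹ *ᵥ v) = v := by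
    intro v
    rw [Matrix.mulVec_mulVec, Matrix.mul_nonsing_inv _ hdet, Matrix.one_mulVec]
  -- norm facts
  have hvv_ub : ∀ x : Fin k, gv' x ⬝ᵥ gv' x ≤ L ^ 2 := fun x => by
    rw [show gv' x ⬝ᵥ gv' x = ‖gval x‖ ^ 2 from (norm_sq_eq_dot _).symm]
    exact pow_le_pow_left₀ (norm_nonneg _) (hL_val x) 2
  have hvv_lb : ∀ x : Fin k, m ^ 2 ≤ gv' x ⬝ᵥ gv' x := fun x => by
    rw [show gv' x ⬝ᵥ gv' x = ‖gval x‖ ^ 2 from (norm_sq_eq_dot _).symm]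
    exact pow_le_pow_left₀ hm.le (hm_val x) 2
  have huu_ub : ∀ z : ι, gS' z ⬝ᵥ gS' z ≤ L ^ 2 := fun z => by
    rw [show gS' z ⬝ᵥ gS' z = ‖gS z‖ ^ 2 from (norm_sq_eq_dot _).symm]
    exact pow_le_pow_left₀ (norm_nonneg _) (hL_S z) 2
  have huu_lb : ∀ z : ι, m ^ 2 ≤ gS' z ⬝ᵥ gS' z := fun z => by
    rw [show gS' z ⬝ᵥ gS' z = ‖gS z‖ ^ 2 from (norm_sq_eq_dot _).symm]
    exact pow_le_pow_left₀ hm.le (hm_S z) 2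
  have hdiff : ∀ (x : Fin k) (z : ι), ‖gval x - gS z‖ ^ 2 =
      gv' x ⬝ᵥ gv' x - 2 * (gS' z ⬝ᵥ gv' x) + gS' z ⬝ᵥ gS' z := by
    intro x z
    rw [norm_sq_eq_dot]
    have h0 : ((gval x - gS z : EuclideanSpace ℝ (Fin d)) : Fin d → ℝ) = gv' x - gS' z := rfl
    rw [h0, sub_dotProduct, dotProduct_sub, dotProduct_sub,
      dotProduct_comm (gv' x) (gS' z)]
    ring
  -- constants
  set e : ℝ := Real.exp (-lam * τ) with he
  have he1 : e < 1 := by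
    rw [he, Real.exp_lt_one_iff]
    nlinarith
  have he0 : 0 < e := Real.exp_pos _
  set Δ : ℝ := (2 * m ^ 2 - τ) ^ 2 / (4 * γ ^ 2 * (1 + L ^ 2 / γ)) with hΔ
  have hden : 4 * γ ^ 2 * (1 + L ^ 2 / γ) = 4 * (γ * (γ + L ^ 2)) := by
    field_simp
  have hΔ' : Δ = (2 * m ^ 2 - τ) ^ 2 / (4 * (γ * (γ + L ^ 2))) := by rw [hΔ, hden]
  have hΔ0 : 0 ≤ Δ := by rw [hΔ']; positivity
  -- indicator
  set ind : Fin k → ℝ := fun x => if ∃ z : ι, ‖gval x - gS z‖ ^ 2 ≤ τ then 1 else 0 with hind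
  have hind01 : ∀ x, 0 ≤ ind x := by
    intro x; simp only [hind]; split <;> norm_num
  -- per-term Fisher bound
  have hmain : ∀ x : Fin k,
      gval x ⬝ᵥ (A⁻¹ *ᵥ gval x) ≤ L ^ 2 / γ - Δ * ind x := by
    intro x
    set w : Fin d → ℝ := A⁻¹ *ᵥ gv' x with hw
    have hvw : A *ᵥ w = gv' x := hAinv _
    have hqform : gv' x ⬝ᵥ w = (∑ z : ι, (gS' z ⬝ᵥ w) ^ 2) + γ * (w ⬝ᵥ w) := by
      rw [← hvw]; exact hquad w
    have hkey : ∀ z0 : ι, gv' x ⬝ᵥ w ≤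
        (gv' x ⬝ᵥ gv' x) / γ - (gS' z0 ⬝ᵥ gv' x) ^ 2 / (γ * (γ + gS' z0 ⬝ᵥ gS' z0)) := by
      intro z0
      apply key_ineq hγ
      rw [hqform]
      have h1 : (gS' z0 ⬝ᵥ w) ^ 2 ≤ ∑ z : ι, (gS' z ⬝ᵥ w) ^ 2 :=
        Finset.single_le_sum (f := fun z => (gS' z ⬝ᵥ w) ^ 2)
          (fun z _ => sq_nonneg _) (Finset.mem_univ z0)
      linarith
    have hgoal : gval x ⬝ᵥ (A⁻¹ *ᵥ gval x) = gv' x ⬝ᵥ w := rfl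
    rw [hgoal]
    clear_value w
    have hvvγ : (gv' x ⬝ᵥ gv' x) / γ ≤ L ^ 2 / γ :=
      (div_le_div_iff_of_pos_right hγ).mpr (hvv_ub x)
    by_cases hcov : ∃ z : ι, ‖gval x - gS z‖ ^ 2 ≤ τ
    · obtain ⟨z0, hz0⟩ := hcov
      have hindx : ind x = 1 := by simp only [hind]; rw [if_pos ⟨z0, hz0⟩]
      rw [hindx, mul_one]
      have hb : (2 * m ^ 2 - τ) / 2 ≤ gS' z0 ⬝ᵥ gv' x := by
        have h5 := hdiff x z0
        have h1 := hvv_lb x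
        have h6 := huu_lb z0
        linarith
      have hb0 : 0 ≤ (2 * m ^ 2 - τ) / 2 := by linarith
      have hb2 : (2 * m ^ 2 - τ) ^ 2 / 4 ≤ (gS' z0 ⬝ᵥ gv' x) ^ 2 := by
        nlinarith [pow_le_pow_left₀ hb0 hb 2]
      have hden2 : 0 < γ * (γ + gS' z0 ⬝ᵥ gS' z0) := by
        have := huu_lb z0; nlinarith
      have hdenle : γ * (γ + gS' z0 ⬝ᵥ gS' z0) ≤ γ * (γ + L ^ 2) := by
        have := huu_ub z0; nlinarith
      have hΔle : Δ ≤ (gS' z0 ⬝ᵥ gv' x) ^ 2 / (γ * (γ + gS' z0 ⬝ᵥ gS' z0)) := by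
        rw [hΔ', show (2 * m ^ 2 - τ) ^ 2 / (4 * (γ * (γ + L ^ 2)))
            = ((2 * m ^ 2 - τ) ^ 2 / 4) / (γ * (γ + L ^ 2)) by rw [div_div]]
        exact div_le_div₀ (sq_nonneg _) hb2 hden2 hdenle
      linarith [hkey z0]
    · have hindx : ind x = 0 := by simp only [hind]; rw [if_neg hcov]
      rw [hindx, mul_zero, sub_zero]
      set z0 := Classical.arbitrary ι with hz0d
      have hden2 : 0 < γ * (γ + gS' z0 ⬝ᵥ gS' z0) := by
        have := huu_lb z0; nlinarith
      have hnn : 0 ≤ (gS' z0 ⬝ᵥ gv' x) ^ 2 / (γ * (γ + gS' z0 ⬝ᵥ gS' z0)) :=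
        div_nonneg (sq_nonneg _) hden2.le
      linarith [hkey z0]
  -- coverage bound
  have hcovb : ∀ x : Fin k,
      (⨆ z : ι, Real.exp (-lam * ‖gval x - gS z‖ ^ 2)) ≤ e + ind x * (1 - e) := by
    intro x
    by_cases hcov : ∃ z : ι, ‖gval x - gS z‖ ^ 2 ≤ τ
    · have hindx : ind x = 1 := by simp only [hind]; rw [if_pos hcov]
      rw [hindx, one_mul]
      have : (⨆ z : ι, Real.exp (-lam * ‖gval x - gS z‖ ^ 2)) ≤ 1 := by
        apply ciSup_le
        intro z
        rw [Real.exp_le_one_iff]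
        nlinarith [sq_nonneg ‖gval x - gS z‖]
      linarith
    · have hindx : ind x = 0 := by simp only [hind]; rw [if_neg hcov]
      rw [hindx, zero_mul, add_zero]
      apply ciSup_le
      intro z
      rw [he]
      apply Real.exp_le_exp.mpr
      push_neg at hcov
      have := (hcov z).le
      nlinarith
  -- summation
  have hsum1 : (∑ x : Fin k, gval x ⬝ᵥ (A⁻¹ *ᵥ gval x))
      ≤ (k : ℝ) * L ^ 2 / γ - Δ * ∑ x : Fin k, ind x := by
    calc (∑ x : Fin k, gval x ⬝ᵥ (A⁻¹ *ᵥ gval x))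
        ≤ ∑ x : Fin k, (L ^ 2 / γ - Δ * ind x) :=
          Finset.sum_le_sum fun x _ => hmain x
      _ = (k : ℝ) * L ^ 2 / γ - Δ * ∑ x : Fin k, ind x := by
          rw [Finset.sum_sub_distrib, Finset.sum_const, ← Finset.mul_sum]
          simp [mul_comm, mul_div_assoc]
  have hsum2 : (∑ x : Fin k, ⨆ z : ι, Real.exp (-lam * ‖gval x - gS z‖ ^ 2))
      ≤ (k : ℝ) * e + (∑ x : Fin k, ind x) * (1 - e) := by
    calc (∑ x : Fin k, ⨆ z : ι, Real.exp (-lam * ‖gval x - gS z‖ ^ 2))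
        ≤ ∑ x : Fin k, (e + ind x * (1 - e)) := Finset.sum_le_sum fun x _ => hcovb x
      _ = (k : ℝ) * e + (∑ x : Fin k, ind x) * (1 - e) := by
          rw [Finset.sum_add_distrib, Finset.sum_const, ← Finset.sum_mul]
          simp [mul_comm]
  set U := ∑ x : Fin k, ⨆ z : ι, Real.exp (-lam * ‖gval x - gS z‖ ^ 2) with hU
  set S := ∑ x : Fin k, ind x with hS
  have hfrac : (U - (k : ℝ) * e) / (1 - e) ≤ S := by
    rw [div_le_iff₀ (by linarith : (0:ℝ) < 1 - e)]
    linarith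
  have hfinal : Δ * ((U - (k : ℝ) * e) / (1 - e)) ≤ Δ * S :=
    mul_le_mul_of_nonneg_left hfrac hΔ0
  linarith
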